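/- Let S = k⟦x,y⟧ with char k ≠ 2. For distinct positive integers k ≠ j, the S/(x²y)-modules coker[[x, y^k],[0, −x]] and coker[[x, y^j],[0, −x]] are not isomorphic. Consequently the matrix factorizations (A_k, diag(y,y), A_k) of x²y with 3 factors are pairwise non-isomorphic, and x²y has infinitely many isomorphism classes of indecomposable reduced 3-fold matrix factorizations. -/

import Mathlib

open MvPowerSeries

/-- A `d`-fold matrix factorization of `f`. -/
def IsMatrixFactorization {S : Type*} [CommRing S] (f : S) {d n : ℕ}
    (φ : Fin d → Matrix (Fin n) (Fin n) S) : Prop :=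
  (List.ofFn φ).prod = f • (1 : Matrix (Fin n) (Fin n) S)

/-- Isomorphism of `d`-fold matrix factorizations. -/
def MFIso {S : Type*} [CommRing S] {d n m : ℕ} [NeZero d]
    (φ : Fin d → Matrix (Fin n) (Fin n) S) (ψ : Fin d → Matrix (Fin m) (Fin m) S) : Prop :=
  ∃ (α : Fin d → Matrix (Fin m) (Fin n) S) (β : Fin d → Matrix (Fin n) (Fin m) S),
    (∀ i, α i * β i = 1) ∧ (∀ i, β i * α i = 1) ∧
    (∀ i, α i * φ i = ψ i * α (i + 1))

/-- Indecomposability: the only idempotent endomorphisms are `0` and `1`. -/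
def MFIndecomposable {S : Type*} [CommRing S] (f : S) {d n : ℕ} [NeZero d]
    (φ : Fin d → Matrix (Fin n) (Fin n) S) : Prop :=
  IsMatrixFactorization f φ ∧
    ∀ e : Fin d → Matrix (Fin n) (Fin n) S, (∀ i, e i * φ i = φ i * e (i + 1)) →
      (∀ i, e i * e i = e i) → e = 0 ∨ e = 1

/-- A matrix factorization is reduced if every entry of every matrix is a nonunit
(i.e. lies in the maximal ideal, in the local case). -/
def MFReduced {S : Type*} [CommRing S] {d n : ℕ}
    (φ : Fin d → Matrix (Fin n) (Fin n) S) : Prop :=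
  ∀ i r c, ¬ IsUnit (φ i r c)

/-- `f` has finite reduced `d`-MF type: up to isomorphism only finitely many
indecomposable reduced `d`-fold matrix factorizations. -/
def FiniteReducedMFType {S : Type*} [CommRing S] (f : S) (d : ℕ) [NeZero d] : Prop :=
  ∃ (N : ℕ) (sz : Fin N → ℕ)
    (Y : ∀ i : Fin N, Fin d → Matrix (Fin (sz i)) (Fin (sz i)) S),
    ∀ (n : ℕ) (φ : Fin d → Matrix (Fin n) (Fin n) S),
      MFIndecomposable f φ → MFReduced φ → ∃ i : Fin N, MFIso φ (Y i)


namespace X2Y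

section Generic
variable {S : Type*} [CommRing S] {d : ℕ} [NeZero d]

lemma mfiso_symm {n m : ℕ}
    {φ : Fin d → Matrix (Fin n) (Fin n) S} {ψ : Fin d → Matrix (Fin m) (Fin m) S}
    (h : MFIso φ ψ) : MFIso ψ φ := by
  obtain ⟨α, β, hab, hba, hc⟩ := h
  refine ⟨β, α, hba, hab, fun i => ?_⟩
  calc β i * ψ i = β i * ψ i * (α (i+1) * β (i+1)) := by rw [hab, Matrix.mul_one]
    _ = β i * (ψ i * α (i+1)) * β (i+1) := by simp only [Matrix.mul_assoc]
    _ = β i * (α i * φ i) * β (i+1) := by rw [← hc i]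
    _ = (β i * α i) * (φ i * β (i+1)) := by simp only [Matrix.mul_assoc]
    _ = φ i * β (i+1) := by rw [hba, Matrix.one_mul]

lemma mfiso_trans {n m p : ℕ}
    {φ : Fin d → Matrix (Fin n) (Fin n) S} {ψ : Fin d → Matrix (Fin m) (Fin m) S}
    {χ : Fin d → Matrix (Fin p) (Fin p) S}
    (h1 : MFIso φ ψ) (h2 : MFIso ψ χ) : MFIso φ χ := by
  obtain ⟨α, β, hab, hba, hc⟩ := h1
  obtain ⟨α', β', hab', hba', hc'⟩ := h2
  refine ⟨fun i => α' i * α i, fun i => β i * β' i, fun i => ?_, fun i => ?_, fun i => ?_⟩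
  · have h : α i * (β i * β' i) = β' i := by rw [← Matrix.mul_assoc, hab i, Matrix.one_mul]
    show α' i * α i * (β i * β' i) = 1
    rw [Matrix.mul_assoc, h, hab' i]
  · have h : β' i * (α' i * α i) = α i := by rw [← Matrix.mul_assoc, hba' i, Matrix.one_mul]
    show β i * β' i * (α' i * α i) = 1
    rw [Matrix.mul_assoc, h, hba i]
  · show α' i * α i * φ i = χ i * (α' (i+1) * α (i+1))
    calc α' i * α i * φ i = α' i * (α i * φ i) := by rw [Matrix.mul_assoc]
      _ = α' i * (ψ i * α (i+1)) := by rw [hc i]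
      _ = (α' i * ψ i) * α (i+1) := by rw [Matrix.mul_assoc]
      _ = (χ i * α' (i+1)) * α (i+1) := by rw [hc' i]
      _ = χ i * (α' (i+1) * α (i+1)) := by rw [Matrix.mul_assoc]

end Generic

variable {k : Type*} [Field k]

lemma Xne (i : Fin 2) : (X i : MvPowerSeries (Fin 2) k) ≠ 0 := by
  intro h
  have := congrArg (coeff (Finsupp.single i 1)) h
  rw [coeff_X, if_pos rfl, map_zero] at this
  exact one_ne_zero this

lemma key1 {m : ℕ} {d : MvPowerSeries (Fin 2) k}
    (h : (X 0 : MvPowerSeries (Fin 2) k) ∣ (X 1) ^ m * d) :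
    (X 0 : MvPowerSeries (Fin 2) k) ∣ d := by
  rw [X_dvd_iff] at h ⊢
  intro μ hμ
  have h2 := h (μ + Finsupp.single 1 m) (by simp [hμ])
  classical
  rw [coeff_mul, Finset.sum_eq_single ((Finsupp.single 1 m : Fin 2 →₀ ℕ), μ)] at h2
  · rwa [coeff_X_pow, if_pos rfl, one_mul] at h2
  · rintro ⟨u, v⟩ huv hne
    rw [coeff_X_pow]
    split_ifs with hu
    · exfalso
      apply hne
      subst hu
      rw [Finset.HasAntidiagonal.mem_antidiagonal] at huv
      have : v = μ := by
        have : Finsupp.single 1 m + v = Finsupp.single 1 m + μ := by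
          rw [huv]; exact add_comm μ _
        exact add_left_cancel this
      rw [this]
    · exact zero_mul _
  · intro hc
    exact absurd (Finset.HasAntidiagonal.mem_antidiagonal.2 (add_comm (Finsupp.single 1 m) μ)) hc

lemma key2 {j : ℕ} (p q : MvPowerSeries (Fin 2) k)
    (h : (X 1 : MvPowerSeries (Fin 2) k) ^ j = X 0 * p + (X 1) ^ (j + 1) * q) : False := by
  have := congrArg (coeff (Finsupp.single 1 j)) h
  rw [coeff_X_pow, if_pos rfl, map_add] at this
  have h1 : coeff (Finsupp.single 1 j) ((X 0 : MvPowerSeries (Fin 2) k) * p) = 0 := by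
    have : (X 0 : MvPowerSeries (Fin 2) k) ∣ X 0 * p := ⟨p, rfl⟩
    rw [X_dvd_iff] at this
    exact this _ (by simp)
  have h2 : coeff (Finsupp.single 1 j) ((X 1 : MvPowerSeries (Fin 2) k) ^ (j+1) * q) = 0 := by
    have hd : (X 1 : MvPowerSeries (Fin 2) k) ^ (j+1) ∣ (X 1) ^ (j+1) * q := ⟨q, rfl⟩
    rw [X_pow_dvd_iff] at hd
    exact hd _ (by simp)
  rw [h1, h2] at this
  simp at this

noncomputable section

abbrev Ik (k : Type*) [Field k] : Ideal (MvPowerSeries (Fin 2) k) :=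
  Ideal.span {(X 0 : MvPowerSeries (Fin 2) k) ^ 2 * X 1}

abbrev Rk (k : Type*) [Field k] := MvPowerSeries (Fin 2) k ⧸ Ik k

abbrev qk (k : Type*) [Field k] : MvPowerSeries (Fin 2) k →+* Rk k := Ideal.Quotient.mk (Ik k)

abbrev Am (k : Type*) [Field k] (j : ℕ) : Matrix (Fin 2) (Fin 2) (MvPowerSeries (Fin 2) k) :=
  !![X 0, X 1 ^ j; 0, -X 0]

abbrev Dm (k : Type*) [Field k] : Matrix (Fin 2) (Fin 2) (MvPowerSeries (Fin 2) k) :=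
  !![X 1, 0; 0, X 1]

abbrev Phi (k : Type*) [Field k] (j : ℕ) :
    Fin 3 → Matrix (Fin 2) (Fin 2) (MvPowerSeries (Fin 2) k) :=
  ![Am k j, Dm k, Am k j]

abbrev Mod (k : Type*) [Field k] (j : ℕ) :=
  (Fin 2 → Rk k) ⧸ LinearMap.range (Matrix.toLin' ((Am k j).map (qk k)))

/-- the distinguishing property -/
def Pprop (k : Type*) [Field k] (m : ℕ) (M : Type*) [AddCommGroup M] [Module (Rk k) M] : Prop :=
  ∀ u : M, ∃ v : M, (qk k (X 0)) • u = (qk k ((X 1) ^ (m + 1))) • v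

lemma transport {m : ℕ} {M N : Type*} [AddCommGroup M] [Module (Rk k) M]
    [AddCommGroup N] [Module (Rk k) N] (e : M ≃ₗ[Rk k] N)
    (h : Pprop k m M) : Pprop k m N := by
  intro u
  obtain ⟨v, hv⟩ := h (e.symm u)
  refine ⟨e v, ?_⟩
  calc (qk k (X 0)) • u = e ((qk k (X 0)) • e.symm u) := by
        rw [map_smul, e.apply_symm_apply]
    _ = e ((qk k ((X 1) ^ (m+1))) • v) := by rw [hv]
    _ = (qk k ((X 1) ^ (m+1))) • e v := by rw [map_smul]

set_option maxHeartbeats 1000000 in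
lemma claim1 {j l : ℕ} (hjl : j + 1 ≤ l) : Pprop k j (Mod k l) := by
  intro u
  obtain ⟨m, rfl⟩ : ∃ m, l = (j + 1) + m := ⟨l - (j + 1), by omega⟩
  obtain ⟨w, rfl⟩ := Submodule.Quotient.mk_surjective _ u
  refine ⟨Submodule.Quotient.mk ![w 1 * (qk k (X 1)) ^ m, 0], ?_⟩
  rw [← Submodule.Quotient.mk_smul, ← Submodule.Quotient.mk_smul, Submodule.Quotient.eq]
  refine LinearMap.mem_range.2 ⟨![w 0, -(w 1)], ?_⟩
  funext i
  fin_cases i <;>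
    simp [Matrix.toLin'_apply, Matrix.mulVec, dotProduct, Fin.sum_univ_two,
      Matrix.map_apply, map_pow, pow_add] <;>
    ring

set_option maxHeartbeats 1000000 in
lemma claim2 {j : ℕ} : ¬ Pprop k j (Mod k j) := by
  intro hP
  obtain ⟨v, hv⟩ := hP (Submodule.Quotient.mk ![0, 1])
  obtain ⟨vv, rfl⟩ := Submodule.Quotient.mk_surjective _ v
  obtain ⟨c, hc⟩ := Ideal.Quotient.mk_surjective (vv 0)
  obtain ⟨d, hd⟩ := Ideal.Quotient.mk_surjective (vv 1)
  rw [← Submodule.Quotient.mk_smul, ← Submodule.Quotient.mk_smul, Submodule.Quotient.eq] at hv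
  obtain ⟨w, hw⟩ := LinearMap.mem_range.1 hv
  obtain ⟨s, hs⟩ := Ideal.Quotient.mk_surjective (w 0)
  obtain ⟨t, ht⟩ := Ideal.Quotient.mk_surjective (w 1)
  have h0 := congrFun hw 0
  have h1 := congrFun hw 1
  simp [Matrix.toLin'_apply, Matrix.mulVec, dotProduct, Fin.sum_univ_two,
    Matrix.map_apply] at h0 h1
  rw [← hs, ← ht, ← hc] at h0
  rw [← ht, ← hd] at h1
  have e1 : qk k ((X 0) * s + (X 1)^j * t + (X 1)^(j+1) * c) = 0 := by
    simp only [map_add, map_mul, map_pow]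
    linear_combination h0
  have e2 : qk k (-(X 0) * t - X 0 + (X 1)^(j+1) * d) = 0 := by
    simp only [map_add, map_sub, map_neg, map_mul, map_pow]
    linear_combination h1
  rw [Ideal.Quotient.eq_zero_iff_mem, Ideal.mem_span_singleton] at e1 e2
  obtain ⟨u1, hu1⟩ := e1
  obtain ⟨u2, hu2⟩ := e2
  have hxd : (X 0 : MvPowerSeries (Fin 2) k) ∣ (X 1) ^ (j+1) * d :=
    ⟨1 + t + X 0 * X 1 * u2, by linear_combination hu2⟩
  obtain ⟨d', hd'⟩ := key1 hxd
  have ht' : t = (X 1)^(j+1) * d' - 1 - X 0 * X 1 * u2 := by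
    have := mul_left_cancel₀ (Xne (k := k) 0)
      (show (X 0 : MvPowerSeries (Fin 2) k) * t
          = X 0 * ((X 1)^(j+1) * d' - 1 - X 0 * X 1 * u2) by
        linear_combination -hu2 + (X 1)^(j+1) * hd')
    exact this
  exact key2 (s - (X 1)^(j+1) * u2 - X 0 * X 1 * u1) ((X 1)^j * d' + c)
    (by linear_combination (X 1)^j * ht' - hu1)

lemma noIso {j l : ℕ} (hjl : j < l) : IsEmpty (Mod k j ≃ₗ[Rk k] Mod k l) := by
  constructor
  intro e
  exact claim2 (transport e.symm (claim1 hjl))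

lemma noIso' {j l : ℕ} (hne : j ≠ l) : IsEmpty (Mod k j ≃ₗ[Rk k] Mod k l) := by
  rcases lt_or_gt_of_ne hne with h | h
  · exact noIso h
  · exact ⟨fun e => (noIso h).false e.symm⟩

set_option maxHeartbeats 1000000 in
/-- MFIso gives an isomorphism of cokernels. -/
lemma iso_of_MFIso {j l : ℕ} (h : MFIso (Phi k j) (Phi k l)) :
    Nonempty (Mod k j ≃ₗ[Rk k] Mod k l) := by
  obtain ⟨α, β, hab, hba, hcomm⟩ := h
  have h0 : α 0 * Am k j = Am k l * α 1 := by
    have := hcomm 0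
    simpa [Phi] using this
  set q := qk k
  set a0 : Matrix (Fin 2) (Fin 2) (Rk k) := (α 0).map q with ha0
  set a1 : Matrix (Fin 2) (Fin 2) (Rk k) := (α 1).map q with ha1
  set b0 : Matrix (Fin 2) (Fin 2) (Rk k) := (β 0).map q with hb0
  set b1 : Matrix (Fin 2) (Fin 2) (Rk k) := (β 1).map q with hb1
  have hab0 : a0 * b0 = 1 := by
    rw [ha0, hb0, ← Matrix.map_mul, hab 0, Matrix.map_one _ (map_zero q) (map_one q)]
  have hba0 : b0 * a0 = 1 := by
    rw [ha0, hb0, ← Matrix.map_mul, hba 0, Matrix.map_one _ (map_zero q) (map_one q)]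
  have hab1 : a1 * b1 = 1 := by
    rw [ha1, hb1, ← Matrix.map_mul, hab 1, Matrix.map_one _ (map_zero q) (map_one q)]
  have hcomm0 : a0 * (Am k j).map q = (Am k l).map q * a1 := by
    rw [ha0, ha1, ← Matrix.map_mul, ← Matrix.map_mul, h0]
  let E : (Fin 2 → Rk k) ≃ₗ[Rk k] (Fin 2 → Rk k) :=
    LinearEquiv.ofLinear (Matrix.toLin' a0) (Matrix.toLin' b0)
      (by rw [← Matrix.toLin'_mul, hab0, Matrix.toLin'_one])
      (by rw [← Matrix.toLin'_mul, hba0, Matrix.toLin'_one])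
  have hrange : (LinearMap.range (Matrix.toLin' ((Am k j).map q))).map
        (E : (Fin 2 → Rk k) →ₗ[Rk k] (Fin 2 → Rk k))
      = LinearMap.range (Matrix.toLin' ((Am k l).map q)) := by
    have hE : (E : (Fin 2 → Rk k) →ₗ[Rk k] (Fin 2 → Rk k)) = Matrix.toLin' a0 := rfl
    rw [hE, ← LinearMap.range_comp, ← Matrix.toLin'_mul, hcomm0, Matrix.toLin'_mul,
      LinearMap.range_comp]
    have : LinearMap.range (Matrix.toLin' a1) = ⊤ := by
      rw [LinearMap.range_eq_top]
      intro v
      exact ⟨Matrix.toLin' b1 v, by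
        rw [← Matrix.toLin'_mul_apply, hab1, Matrix.toLin'_one, LinearMap.id_apply]⟩
    rw [this, Submodule.map_top]
  exact ⟨Submodule.Quotient.equiv _ _ E hrange⟩

lemma not_MFIso {j l : ℕ} (hne : j ≠ l) : ¬ MFIso (Phi k j) (Phi k l) := by
  intro h
  obtain ⟨e⟩ := iso_of_MFIso h
  exact (noIso' hne).false e

set_option maxHeartbeats 1000000 in
lemma hA2 (j : ℕ) : Am k j * Am k j
    = ((X 0 : MvPowerSeries (Fin 2) k) ^ 2) • (1 : Matrix (Fin 2) (Fin 2) (MvPowerSeries (Fin 2) k)) := by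
  refine Matrix.ext fun r c => ?_
  fin_cases r <;> fin_cases c <;>
    simp [Matrix.mul_apply, Fin.sum_univ_two, Matrix.one_apply] <;> ring

set_option maxHeartbeats 1000000 in
lemma indec_core (j : ℕ) (hj : 1 ≤ j)
    (e0 e1 : Matrix (Fin 2) (Fin 2) (MvPowerSeries (Fin 2) k))
    (hc0 : e0 * Am k j = Am k j * e1)
    (hid : e0 * e0 = e0) : e0 = 0 ∨ e0 = 1 := by
  set x : MvPowerSeries (Fin 2) k := X 0 with hx
  set y : MvPowerSeries (Fin 2) k := X 1 with hy
  have hx0 : x ≠ 0 := Xne 0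
  set a := e0 0 0 with ha; set b := e0 0 1 with hb
  set c := e0 1 0 with hcc; set d := e0 1 1 with hd
  set a' := e1 0 0 with ha'; set b' := e1 0 1 with hb'
  set c' := e1 1 0 with hc'; set d' := e1 1 1 with hd'
  have EQ00 := congrFun (congrFun hc0 0) 0
  have EQ01 := congrFun (congrFun hc0 0) 1
  have EQ10 := congrFun (congrFun hc0 1) 0
  have EQ11 := congrFun (congrFun hc0 1) 1
  simp only [Matrix.mul_apply, Fin.sum_univ_two] at EQ00 EQ01 EQ10 EQ11
  simp [Am, ← ha, ← hb, ← hcc, ← hd, ← ha', ← hb', ← hc', ← hd'] at EQ00 EQ01 EQ10 EQ11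
  have h00 := congrFun (congrFun hid 0) 0
  have h01 := congrFun (congrFun hid 0) 1
  have h10 := congrFun (congrFun hid 1) 0
  have h11 := congrFun (congrFun hid 1) 1
  simp only [Matrix.mul_apply, Fin.sum_univ_two, ← ha, ← hb, ← hcc, ← hd] at h00 h01 h10 h11
  by_cases ht : a + d = 1
  · exfalso
    have hcn : c' = -c := mul_left_cancel₀ hx0 (by linear_combination EQ10)
    have hxc : x ∣ y ^ j * c := ⟨a' - a, by linear_combination EQ00 + (y^j) * hcn⟩
    obtain ⟨c1, hc1⟩ := key1 hxc
    have hdn : d' = d - y ^ j * c1 := mul_left_cancel₀ hx0 (by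
      linear_combination EQ11 - (y ^ j) * hc1)
    have hbb : y ^ j * (a - d + y ^ j * c1) = x * (b + b') := by
      linear_combination EQ01 + (y^j) * hdn
    obtain ⟨g, hg⟩ := key1 (m := j) ⟨b + b', hbb⟩
    have hdet : a * d = x * (b * c1) := by
      have hbc : b * c = a * d := by linear_combination h00 - a * ht
      linear_combination -hbc + b * hc1
    have hone : constantCoeff a + constantCoeff d = 1 := by
      have := congrArg (constantCoeff) ht
      simpa using this
    have hy0 : constantCoeff (y ^ j * c1) = 0 := by
      have : constantCoeff y = 0 := constantCoeff_X 1
      rw [map_mul, map_pow, this, zero_pow (by omega), zero_mul]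
    by_cases hca : constantCoeff a = 0
    · have hdu : IsUnit d := by
        rw [isUnit_iff_constantCoeff]
        have : constantCoeff d = 1 := by rw [← hone, hca, zero_add]
        rw [this]; exact isUnit_one
      obtain ⟨u, hu⟩ := hdu
      have hxa : x ∣ a := by
        have h1 : x ∣ d * a := ⟨b * c1, by linear_combination hdet⟩
        have : (↑u⁻¹ : MvPowerSeries (Fin 2) k) * (d * a) = a := by
          rw [← hu, Units.inv_mul_cancel_left]
        exact this ▸ h1.mul_left _
      obtain ⟨a1, ha1⟩ := hxa
      have : x ∣ y ^ j * c1 - 1 := ⟨g - 2 * a1, by linear_combination hg + ht - 2 * ha1⟩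
      obtain ⟨w, hw⟩ := this
      have := congrArg (constantCoeff) hw
      rw [map_sub, map_one, hy0, map_mul] at this
      rw [show constantCoeff x = 0 from constantCoeff_X 0, zero_mul] at this
      norm_num at this
    · have hau : IsUnit a := by
        rw [isUnit_iff_constantCoeff]
        exact isUnit_iff_ne_zero.2 hca
      obtain ⟨u, hu⟩ := hau
      have hxd : x ∣ d := by
        have h1 : x ∣ a * d := ⟨b * c1, hdet⟩
        have : (↑u⁻¹ : MvPowerSeries (Fin 2) k) * (a * d) = d := by
          rw [← hu, Units.inv_mul_cancel_left]
        exact this ▸ h1.mul_left _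
      obtain ⟨d1, hd1⟩ := hxd
      have : x ∣ y ^ j * c1 + 1 := ⟨g + 2 * d1, by linear_combination hg - ht + 2 * hd1⟩
      obtain ⟨w, hw⟩ := this
      have := congrArg (constantCoeff) hw
      rw [map_add, map_one, hy0, map_mul] at this
      rw [show constantCoeff x = 0 from constantCoeff_X 0, zero_mul] at this
      norm_num at this
  · have htne : a + d - 1 ≠ 0 := fun h => ht (by linear_combination h)
    have hb0 : b = 0 := by
      rcases mul_eq_zero.1 (show b * (a + d - 1) = 0 by linear_combination h01) with h | h
      · exact h
      · exact absurd h htne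
    have hc0' : c = 0 := by
      rcases mul_eq_zero.1 (show c * (a + d - 1) = 0 by linear_combination h10) with h | h
      · exact h
      · exact absurd h htne
    have had : a = d := by
      rcases mul_eq_zero.1 (show (a - d) * (a + d - 1) = 0 by
        linear_combination h00 - h11) with h | h
      · exact sub_eq_zero.1 h
      · exact absurd h htne
    have haa : a * a = a := by linear_combination h00 - c * hb0
    rcases mul_eq_zero.1 (show a * (a - 1) = 0 by linear_combination haa) with h | h
    · left
      refine Matrix.ext fun r cc => ?_
      fin_cases r <;> fin_cases cc <;>
        simp [← ha, ← hb, ← hcc, ← hd, h, hb0, hc0', had ▸ h]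
    · right
      have ha1 : a = 1 := by linear_combination h
      refine Matrix.ext fun r cc => ?_
      fin_cases r <;> fin_cases cc <;>
        simp [Matrix.one_apply, ← ha, ← hb, ← hcc, ← hd, ha1, hb0, hc0', had ▸ ha1]

set_option maxHeartbeats 1000000 in
lemma isMF (j : ℕ) :
    IsMatrixFactorization ((X 0 : MvPowerSeries (Fin 2) k) ^ 2 * X 1) (Phi k j) := by
  unfold IsMatrixFactorization
  have : List.ofFn (Phi k j) = [Am k j, Dm k, Am k j] := by
    simp [List.ofFn_succ]
  rw [this]
  refine Matrix.ext fun r c => ?_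
  fin_cases r <;> fin_cases c <;>
    simp [List.prod_cons, Matrix.mul_apply, Fin.sum_univ_two, Matrix.one_apply] <;> ring

set_option maxHeartbeats 1000000 in
lemma reduced (j : ℕ) (hj : 1 ≤ j) : MFReduced (Phi k j) := by
  intro i r c h
  fin_cases i <;> fin_cases r <;> fin_cases c <;>
    simp [Phi, Am, Dm, isUnit_iff_constantCoeff, constantCoeff_X, isUnit_zero_iff,
      zero_pow (show j ≠ 0 by omega)] at h

set_option maxHeartbeats 1000000 in
lemma indec (j : ℕ) (hj : 1 ≤ j) :
    MFIndecomposable ((X 0 : MvPowerSeries (Fin 2) k) ^ 2 * X 1) (Phi k j) := by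
  refine ⟨isMF j, fun e hcomm hid => ?_⟩
  have hc0 : e 0 * Am k j = Am k j * e 1 := by
    have := hcomm 0
    simpa [Phi] using this
  have hD : e 1 * Dm k = Dm k * e 2 := by
    have := hcomm 1
    simpa [Phi] using this
  have h12 : e 1 = e 2 := by
    have hDs : Dm k = (X 1 : MvPowerSeries (Fin 2) k) • (1 : Matrix (Fin 2) (Fin 2) (MvPowerSeries (Fin 2) k)) := by
      refine Matrix.ext fun r c => ?_
      fin_cases r <;> fin_cases c <;> simp [Matrix.one_apply]
    have hys : (X 1 : MvPowerSeries (Fin 2) k) • e 1 = (X 1 : MvPowerSeries (Fin 2) k) • e 2 := by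
      calc (X 1 : MvPowerSeries (Fin 2) k) • e 1
          = e 1 * ((X 1 : MvPowerSeries (Fin 2) k) • 1) := by rw [Matrix.mul_smul, Matrix.mul_one]
        _ = ((X 1 : MvPowerSeries (Fin 2) k) • 1) * e 2 := by rw [← hDs, hD]
        _ = (X 1 : MvPowerSeries (Fin 2) k) • e 2 := by rw [Matrix.smul_mul, Matrix.one_mul]
    refine Matrix.ext fun r c => ?_
    have := congrFun (congrFun hys r) c
    simp only [Matrix.smul_apply, smul_eq_mul] at this
    exact mul_left_cancel₀ (Xne 1) this
  have hx2 : ((X 0 : MvPowerSeries (Fin 2) k) ^ 2) ≠ 0 := pow_ne_zero _ (Xne 0)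
  rcases indec_core j hj (e 0) (e 1) hc0 (hid 0) with h | h
  · left
    have hA1 : Am k j * e 1 = 0 := by rw [← hc0, h, zero_mul]
    have he1 : e 1 = 0 := by
      have : ((X 0 : MvPowerSeries (Fin 2) k) ^ 2) • e 1 = 0 := by
        calc ((X 0 : MvPowerSeries (Fin 2) k) ^ 2) • e 1
            = (((X 0 : MvPowerSeries (Fin 2) k) ^ 2) • (1 : Matrix (Fin 2) (Fin 2) _)) * e 1 := by
              rw [Matrix.smul_mul, one_mul]
          _ = Am k j * (Am k j * e 1) := by rw [← hA2 j, mul_assoc]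
          _ = 0 := by rw [hA1, Matrix.mul_zero]
      refine Matrix.ext fun r c => ?_
      have := congrFun (congrFun this r) c
      simp only [Matrix.smul_apply, smul_eq_mul, Matrix.zero_apply] at this
      exact (mul_eq_zero.1 this).resolve_left hx2
    funext i
    fin_cases i
    · show e 0 = 0; exact h
    · show e 1 = 0; exact he1
    · show e 2 = 0; rw [← h12]; exact he1
  · right
    have hA1 : Am k j * e 1 = Am k j := by rw [← hc0, h, one_mul]
    have he1 : e 1 = 1 := by
      have : ((X 0 : MvPowerSeries (Fin 2) k) ^ 2) • e 1
          = ((X 0 : MvPowerSeries (Fin 2) k) ^ 2) • (1 : Matrix (Fin 2) (Fin 2) _) := by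
        calc ((X 0 : MvPowerSeries (Fin 2) k) ^ 2) • e 1
            = (((X 0 : MvPowerSeries (Fin 2) k) ^ 2) • (1 : Matrix (Fin 2) (Fin 2) _)) * e 1 := by
              rw [Matrix.smul_mul, one_mul]
          _ = Am k j * (Am k j * e 1) := by rw [← hA2 j, mul_assoc]
          _ = _ := by rw [hA1, hA2 j]
      refine Matrix.ext fun r c => ?_
      have := congrFun (congrFun this r) c
      simp only [Matrix.smul_apply, smul_eq_mul] at this
      exact mul_left_cancel₀ hx2 this
    funext i
    fin_cases i
    · show e 0 = 1; exact h
    · show e 1 = 1; exact he1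
    · show e 2 = 1; rw [← h12]; exact he1

lemma not_finite : ¬ FiniteReducedMFType ((X 0 : MvPowerSeries (Fin 2) k) ^ 2 * X 1) 3 := by
  intro hfin
  obtain ⟨N, sz, Y, hY⟩ := hfin
  have hch : ∀ n : ℕ, ∃ i : Fin N, MFIso (Phi k (n+1)) (Y i) := fun n =>
    hY 2 (Phi k (n+1)) (indec (n+1) (by omega)) (reduced (n+1) (by omega))
  choose i hi using hch
  obtain ⟨m, n, hmn, heq⟩ := Finite.exists_ne_map_eq_of_infinite i
  exact not_MFIso (show m + 1 ≠ n + 1 by omega)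
    (mfiso_trans (hi m) (mfiso_symm (heq ▸ hi n)))

end
end X2Y

/- STATEMENT 14: over `S = k⟦x,y⟧` (`char k ≠ 2`) with `R = S/(x²y)`, the cokernels
of `A_j = [[x, y^j],[0, −x]]` for distinct `j ≥ 1` are non-isomorphic `R`-modules;
consequently the 3-fold matrix factorizations `(A_j, diag(y,y), A_j)` of `x²y` are
pairwise non-isomorphic, and `x²y` has infinitely many isomorphism classes of
indecomposable reduced 3-fold matrix factorizations. -/
set_option synthInstance.maxHeartbeats 1000000 in
set_option maxHeartbeats 1000000 in
theorem x2y_infinite_reduced_threefold_type {k : Type*} [Field k]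
    (hchar : (2 : k) ≠ 0) :
    (∀ j l : ℕ, 1 ≤ j → 1 ≤ l → j ≠ l →
      IsEmpty
        (((Fin 2 → MvPowerSeries (Fin 2) k ⧸
            Ideal.span {(X 0 : MvPowerSeries (Fin 2) k) ^ 2 * X 1}) ⧸
          LinearMap.range (Matrix.toLin'
            ((!![(X 0 : MvPowerSeries (Fin 2) k), (X 1) ^ j; 0, -(X 0)]).map
              (Ideal.Quotient.mk
                (Ideal.span {(X 0 : MvPowerSeries (Fin 2) k) ^ 2 * X 1}))))) ≃ₗ[
          MvPowerSeries (Fin 2) k ⧸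
            Ideal.span {(X 0 : MvPowerSeries (Fin 2) k) ^ 2 * X 1}]
         ((Fin 2 → MvPowerSeries (Fin 2) k ⧸
            Ideal.span {(X 0 : MvPowerSeries (Fin 2) k) ^ 2 * X 1}) ⧸
          LinearMap.range (Matrix.toLin'
            ((!![(X 0 : MvPowerSeries (Fin 2) k), (X 1) ^ l; 0, -(X 0)]).map
              (Ideal.Quotient.mk
                (Ideal.span {(X 0 : MvPowerSeries (Fin 2) k) ^ 2 * X 1}))))))) ∧
    (∀ j l : ℕ, 1 ≤ j → 1 ≤ l → j ≠ l →
      ¬ MFIso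
        (![!![(X 0 : MvPowerSeries (Fin 2) k), (X 1) ^ j; 0, -(X 0)],
           !![(X 1 : MvPowerSeries (Fin 2) k), 0; 0, X 1],
           !![(X 0 : MvPowerSeries (Fin 2) k), (X 1) ^ j; 0, -(X 0)]])
        (![!![(X 0 : MvPowerSeries (Fin 2) k), (X 1) ^ l; 0, -(X 0)],
           !![(X 1 : MvPowerSeries (Fin 2) k), 0; 0, X 1],
           !![(X 0 : MvPowerSeries (Fin 2) k), (X 1) ^ l; 0, -(X 0)]])) ∧
    ¬ FiniteReducedMFType ((X 0 : MvPowerSeries (Fin 2) k) ^ 2 * X 1) 3 := by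
  refine ⟨?_, ?_, ?_⟩
  · exact fun j l _ _ hne => X2Y.noIso' hne
  · exact fun j l _ _ hne => X2Y.not_MFIso hne
  · exact X2Y.not_finite
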